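/- Let γ(t) = (t, t²/2!, …, t^{d−1}/(d−1)!, φ(t)) be a curve of simple type in ℝ^d with φ ∈ C^d, and for κ = (κ₁,…,κ_d) define the offspring curve γ_κ(t) = ∑_{j=1}^d γ(t + κ_j). Then the torsion of the offspring curve satisfies τ_{γ_κ}(t) = d^{d−1} · ∑_{j=1}^d φ^{(d)}(t + κ_j), where the torsion of a curve Γ is det(Γ'(t),…,Γ^{(d)}(t)). -/

import Mathlib

/-- The simple-type curve `γ(t) = (t, t²/2!, …, t^{d-1}/(d-1)!, φ(t))` in `ℝ^d`. -/
noncomputable def simpleCurve (d : ℕ) (φ : ℝ → ℝ) (t : ℝ) : Fin d → ℝ :=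
  fun i => if i.val < d - 1 then t ^ (i.val + 1) / (Nat.factorial (i.val + 1)) else φ t

private lemma iteratedDeriv_zero_fun (n : ℕ) :
    iteratedDeriv n (fun _ : ℝ => (0:ℝ)) = fun _ => 0 := by
  induction n with
  | zero => simp
  | succ n IH => rw [iteratedDeriv_succ', deriv_const']; exact IH

private lemma iter_poly (c : ℝ) : ∀ n m : ℕ,
    iteratedDeriv n (fun s : ℝ => (s + c) ^ m / (Nat.factorial m)) =
      fun t => if n ≤ m then (t + c) ^ (m - n) / (Nat.factorial (m - n)) else 0 := by
  intro n
  induction n with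
  | zero => intro m; simp
  | succ n IH =>
    intro m
    rw [iteratedDeriv_succ']
    cases m with
    | zero =>
      have : deriv (fun s : ℝ => (s + c) ^ 0 / (Nat.factorial 0)) = fun _ => 0 := by
        funext s; simp
      rw [this, iteratedDeriv_zero_fun]
      funext t; simp
    | succ m =>
      have hder : deriv (fun s : ℝ => (s + c) ^ (m + 1) / (Nat.factorial (m + 1))) =
          fun s => (s + c) ^ m / (Nat.factorial m) := by
        funext s
        have h1 : HasDerivAt (fun s : ℝ => (s + c) ^ (m + 1) / (Nat.factorial (m + 1)))
            (((m + 1 : ℕ) * (s + c) ^ m * 1) / (Nat.factorial (m + 1))) s := by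
          exact (((hasDerivAt_id s).add_const c).pow (m + 1)).div_const _
        rw [h1.deriv]
        have hfac : (Nat.factorial (m + 1) : ℝ) = (m + 1) * Nat.factorial m := by
          rw [Nat.factorial_succ]; push_cast; ring
        rw [hfac]
        have hm1 : ((m : ℝ) + 1) ≠ 0 := by positivity
        have hf : (Nat.factorial m : ℝ) ≠ 0 := by
          exact_mod_cast Nat.factorial_ne_zero m
        field_simp
        push_cast
        ring
      rw [hder, IH m]
      funext t
      by_cases h : n ≤ m
      · rw [if_pos h, if_pos (by omega), Nat.succ_sub_succ]
      · rw [if_neg h, if_neg (by omega)]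

private lemma iteratedDeriv_finsum {ι : Type*} (u : Finset ι) (f : ι → ℝ → ℝ) (n : ℕ)
    (hf : ∀ j ∈ u, ContDiff ℝ (n : ℕ∞) (f j)) (t : ℝ) :
    iteratedDeriv n (fun s => ∑ j ∈ u, f j s) t = ∑ j ∈ u, iteratedDeriv n (f j) t := by
  simp only [iteratedDeriv_eq_iteratedFDeriv]
  rw [iteratedFDeriv_sum hf]
  simp

theorem stmt5 (d : ℕ) (hd : 1 ≤ d) (φ : ℝ → ℝ) (hφ : ContDiff ℝ (d : ℕ∞) φ)
    (κ : Fin d → ℝ) (t : ℝ) :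
    (Matrix.of (fun (i k : Fin d) =>
        iteratedDeriv (k.val + 1) (fun s => ∑ j, simpleCurve d φ (s + κ j) i) t)).det
      = (d : ℝ) ^ (d - 1) * ∑ j, iteratedDeriv d φ (t + κ j) := by
  set M : Matrix (Fin d) (Fin d) ℝ := Matrix.of (fun (i k : Fin d) =>
        iteratedDeriv (k.val + 1) (fun s => ∑ j, simpleCurve d φ (s + κ j) i) t) with hM
  -- Entries for rows i < d - 1
  have hrow : ∀ (i k : Fin d), (i : ℕ) < d - 1 →
      M i k = if (k : ℕ) + 1 ≤ (i : ℕ) + 1 then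
        ∑ j, (t + κ j) ^ ((i : ℕ) + 1 - ((k : ℕ) + 1)) /
          (Nat.factorial ((i : ℕ) + 1 - ((k : ℕ) + 1))) else 0 := by
    intro i k hi
    have hfun : (fun s => ∑ j, simpleCurve d φ (s + κ j) i) =
        fun s => ∑ j, (s + κ j) ^ ((i : ℕ) + 1) / (Nat.factorial ((i : ℕ) + 1)) := by
      funext s
      refine Finset.sum_congr rfl fun j _ => ?_
      simp [simpleCurve, hi]
    rw [hM]
    simp only [Matrix.of_apply]
    rw [hfun, iteratedDeriv_finsum _ _ _ (fun j _ => ?_) t]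
    · have := fun j : Fin d => congrFun (iter_poly (κ j) ((k : ℕ) + 1) ((i : ℕ) + 1)) t
      simp only [this]
      by_cases h : (k : ℕ) + 1 ≤ (i : ℕ) + 1
      · simp [h]
      · simp [h]
    · -- polynomial is smooth
      exact ContDiff.div_const (ContDiff.pow (contDiff_id.add contDiff_const) _) _
  -- Last row entries
  have hlast : ∀ (i k : Fin d), ¬ ((i : ℕ) < d - 1) →
      M i k = ∑ j, iteratedDeriv ((k : ℕ) + 1) φ (t + κ j) := by
    intro i k hi
    have hfun : (fun s => ∑ j, simpleCurve d φ (s + κ j) i) =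
        fun s => ∑ j, φ (s + κ j) := by
      funext s
      refine Finset.sum_congr rfl fun j _ => ?_
      simp [simpleCurve, hi]
    rw [hM]
    simp only [Matrix.of_apply]
    rw [hfun, iteratedDeriv_finsum _ _ _ (fun j _ => ?_) t]
    · refine Finset.sum_congr rfl fun j _ => ?_
      exact congrFun (iteratedDeriv_comp_add_const ((k : ℕ) + 1) φ (κ j)) t
    · -- φ ∘ translation is C^(k+1); note k + 1 ≤ d
      have hk : (k : ℕ) + 1 ≤ d := k.isLt
      exact ((hφ.of_le (by exact_mod_cast hk)).comp (contDiff_id.add contDiff_const))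
  -- M is lower triangular
  have htri : M.BlockTriangular OrderDual.toDual := by
    intro i k hik
    have hik' : (i : ℕ) < (k : ℕ) := hik
    have hi : (i : ℕ) < d - 1 := by
      have := k.isLt; omega
    rw [hrow i k hi, if_neg (by omega)]
  rw [Matrix.det_of_lowerTriangular M htri]
  -- compute the product of diagonal entries
  have hdiag : ∀ i : Fin d, M i i =
      if (i : ℕ) < d - 1 then (d : ℝ) else ∑ j, iteratedDeriv d φ (t + κ j) := by
    intro i
    by_cases hi : (i : ℕ) < d - 1
    · rw [if_pos hi, hrow i i hi, if_pos le_rfl]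
      simp
    · rw [if_neg hi, hlast i i hi]
      have : (i : ℕ) + 1 = d := by have := i.isLt; omega
      rw [this]
  obtain ⟨n, hn⟩ : ∃ n, d = n + 1 := ⟨d - 1, by omega⟩
  subst hn
  rw [Fin.prod_univ_castSucc]
  have h1 : ∀ i : Fin n, M i.castSucc i.castSucc = ((n : ℝ) + 1) := by
    intro i
    rw [hdiag i.castSucc, if_pos (by simp)]
    push_cast; ring
  have h2 : M (Fin.last n) (Fin.last n) = ∑ j, iteratedDeriv (n + 1) φ (t + κ j) := by
    rw [hdiag (Fin.last n), if_neg (by simp [Fin.val_last])]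
  rw [h2]
  rw [Finset.prod_congr rfl (fun i _ => h1 i), Finset.prod_const]
  simp only [Finset.card_univ, Fintype.card_fin, Nat.add_sub_cancel]
  push_cast
  ring
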